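/- If (H, R) is a quasitriangular Hopf algebra and u = ∑ (S R⁽²⁾) R⁽¹⁾ (where R = ∑ R⁽¹⁾ ⊗ R⁽²⁾), then u is invertible with inverse u⁻¹ = ∑ R⁽²⁾ S²(R⁽¹⁾), and S²(h) = u h u⁻¹ for all h ∈ H. -/

import Mathlib

set_option synthInstance.maxHeartbeats 400000
set_option maxHeartbeats 1600000

open TensorProduct

namespace Stmt3

variable {k H : Type} [Field k] [Ring H] [HopfAlgebra k H]

noncomputable def ι12 : (H ⊗[k] H) →ₐ[k] H ⊗[k] (H ⊗[k] H) :=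
  Algebra.TensorProduct.map (AlgHom.id k H) Algebra.TensorProduct.includeLeft

noncomputable def ι13 : (H ⊗[k] H) →ₐ[k] H ⊗[k] (H ⊗[k] H) :=
  Algebra.TensorProduct.map (AlgHom.id k H) Algebra.TensorProduct.includeRight

noncomputable def ι23 : (H ⊗[k] H) →ₐ[k] H ⊗[k] (H ⊗[k] H) :=
  Algebra.TensorProduct.includeRight

/-- `u = ∑ (S R⁽²⁾) R⁽¹⁾`, i.e. multiplication applied to `(S ⊗ id)(τ R)`. -/
noncomputable def uElt (R : H ⊗[k] H) : H :=
  (LinearMap.mul' k H)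
    ((TensorProduct.map (HopfAlgebra.antipode (R := k) (A := H)) LinearMap.id)
      ((TensorProduct.comm k H H) R))

/-- `u' = ∑ R⁽²⁾ S²(R⁽¹⁾)`, the claimed inverse of `u`. -/
noncomputable def uInvElt (R : H ⊗[k] H) : H :=
  (LinearMap.mul' k H)
    ((TensorProduct.map LinearMap.id
        ((HopfAlgebra.antipode (R := k) (A := H)) ∘ₗ (HopfAlgebra.antipode (R := k) (A := H))))
      ((TensorProduct.comm k H H) R))

local notation "S" => HopfAlgebra.antipode (R := k) (A := H)
local notation "Δ" => Coalgebra.comul (R := k) (A := H)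
local notation "ε" => Coalgebra.counit (R := k) (A := H)
local notation "μ" => LinearMap.mul' k H

section Conv

variable {C : Type} [AddCommGroup C] [Module k C] [Coalgebra k C]

/-- convolution product on `Hom(C, H)` -/
noncomputable def conv (f g : C →ₗ[k] H) : C →ₗ[k] H :=
  (LinearMap.mul' k H) ∘ₗ (TensorProduct.map f g) ∘ₗ (Coalgebra.comul (R := k) (A := C))

noncomputable def convUnit : C →ₗ[k] H :=
  (Algebra.linearMap k H) ∘ₗ (Coalgebra.counit (R := k) (A := C))

lemma conv_assoc (f g h : C →ₗ[k] H) : conv (conv f g) h = conv f (conv g h) := by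
  have L1 : (LinearMap.mul' k H) ∘ₗ
        TensorProduct.map ((LinearMap.mul' k H) ∘ₗ TensorProduct.map f g) h =
      ((LinearMap.mul' k H) ∘ₗ
        TensorProduct.map f ((LinearMap.mul' k H) ∘ₗ TensorProduct.map g h)) ∘ₗ
        (TensorProduct.assoc k C C C).toLinearMap := by
    apply TensorProduct.ext_threefold
    intro x y z
    simp [mul_assoc]
  have e1 : TensorProduct.map (conv f g) h =
      TensorProduct.map ((LinearMap.mul' k H) ∘ₗ TensorProduct.map f g) h ∘ₗ
        LinearMap.rTensor C (Coalgebra.comul (R := k)) := by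
    apply TensorProduct.ext'
    intro x y
    simp [conv]
  have e2 : TensorProduct.map f (conv g h) =
      TensorProduct.map f ((LinearMap.mul' k H) ∘ₗ TensorProduct.map g h) ∘ₗ
        LinearMap.lTensor C (Coalgebra.comul (R := k)) := by
    apply TensorProduct.ext'
    intro x y
    simp [conv]
  ext c
  have h1 := LinearMap.congr_fun L1
    ((TensorProduct.assoc k C C C).symm
      (LinearMap.lTensor C (Coalgebra.comul (R := k)) (Coalgebra.comul (R := k) c)))
  simp only [LinearMap.comp_apply, LinearEquiv.coe_coe, LinearEquiv.apply_symm_apply] at h1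
  show (LinearMap.mul' k H) ((TensorProduct.map (conv f g) h) (Coalgebra.comul c)) =
    (LinearMap.mul' k H) ((TensorProduct.map f (conv g h)) (Coalgebra.comul c))
  rw [e1, e2]
  simp only [LinearMap.comp_apply]
  rw [← Coalgebra.coassoc_symm_apply c]
  exact h1

lemma conv_unit_left (f : C →ₗ[k] H) : conv convUnit f = f := by
  ext c
  have h1 : TensorProduct.map (convUnit (k := k) (H := H) (C := C)) f =
      (TensorProduct.map (Algebra.linearMap k H) f) ∘ₗ
        LinearMap.rTensor C (Coalgebra.counit (R := k)) := by
    rw [LinearMap.map_comp_rTensor]; rfl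
  simp only [conv, LinearMap.comp_apply, h1, Coalgebra.rTensor_counit_comul]
  simp

lemma conv_unit_right (f : C →ₗ[k] H) : conv f convUnit = f := by
  ext c
  have h1 : TensorProduct.map f (convUnit (k := k) (H := H) (C := C)) =
      (TensorProduct.map f (Algebra.linearMap k H)) ∘ₗ
        LinearMap.lTensor C (Coalgebra.counit (R := k)) := by
    rw [LinearMap.map_comp_lTensor]; rfl
  simp only [conv, LinearMap.comp_apply, h1, Coalgebra.lTensor_counit_comul]
  simp

end Conv

section Antipode

lemma comul_tmulHH (a b : H) : Coalgebra.comul (R := k) (a ⊗ₜ[k] b) =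
    TensorProduct.tensorTensorTensorComm k H H H H
      ((Coalgebra.comul (R := k) a) ⊗ₜ (Coalgebra.comul (R := k) b)) := rfl

lemma counit_tmulHH (a b : H) : Coalgebra.counit (R := k) (A := H ⊗[k] H) (a ⊗ₜ[k] b) =
    Coalgebra.counit (R := k) a * Coalgebra.counit (R := k) b := by
  rw [TensorProduct.counit_tmul, smul_eq_mul, mul_comm]

/-- `ν (a ⊗ b) = S b * S a` -/
noncomputable def nu : H ⊗[k] H →ₗ[k] H :=
  (LinearMap.mul' k H) ∘ₗ (TensorProduct.map S S) ∘ₗ (TensorProduct.comm k H H).toLinearMap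

lemma hmumu (X Y : H ⊗[k] H) :
    TensorProduct.map (LinearMap.mul' k H) (LinearMap.mul' k H)
      (TensorProduct.tensorTensorTensorComm k H H H H (X ⊗ₜ Y)) = X * Y := by
  induction X with
  | zero => simp
  | tmul x₁ x₂ =>
    induction Y with
    | zero => simp
    | tmul y₁ y₂ => simp [Algebra.TensorProduct.tmul_mul_tmul]
    | add Y₁ Y₂ h₁ h₂ => simp only [tmul_add, map_add, h₁, h₂, mul_add]
  | add X₁ X₂ h₁ h₂ => simp only [add_tmul, map_add, h₁, h₂, add_mul]

lemma key1 : conv ((S) ∘ₗ LinearMap.mul' k H) (LinearMap.mul' k H) =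
    (convUnit (C := H ⊗[k] H)) := by
  apply TensorProduct.ext'
  intro x y
  have e1 : TensorProduct.map ((S) ∘ₗ LinearMap.mul' k H) (LinearMap.mul' k H) =
      LinearMap.rTensor H (S) ∘ₗ
        TensorProduct.map (LinearMap.mul' k H) (LinearMap.mul' k H) := by
    rw [LinearMap.rTensor_comp_map]
  show (LinearMap.mul' k H) ((TensorProduct.map _ _) (Coalgebra.comul (R := k) (x ⊗ₜ y))) = _
  rw [comul_tmulHH, e1]
  simp only [LinearMap.comp_apply, hmumu, ← Bialgebra.comul_mul]
  rw [HopfAlgebra.mul_antipode_rTensor_comul_apply]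
  show (algebraMap k H) (Coalgebra.counit (R := k) (x * y)) =
    (algebraMap k H) (Coalgebra.counit (R := k) (A := H ⊗[k] H) (x ⊗ₜ y))
  rw [counit_tmulHH, ← Bialgebra.counit_mul]

lemma key2aux1 (x y : H) (Z : H ⊗[k] H) :
    (LinearMap.mul' k H) (TensorProduct.map (LinearMap.mul' k H) (nu (k := k) (H := H))
      (TensorProduct.tensorTensorTensorComm k H H H H ((x ⊗ₜ y) ⊗ₜ Z))) =
    x * ((LinearMap.mul' k H) (LinearMap.lTensor H (S) Z)) * S y := by
  induction Z with
  | zero => simp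
  | tmul z w => simp [nu, mul_assoc]
  | add Z₁ Z₂ h₁ h₂ => simp only [tmul_add, map_add, h₁, h₂, mul_add, add_mul]

lemma key2aux2 (X : H ⊗[k] H) (b : H) :
    (LinearMap.mul' k H) (TensorProduct.map (LinearMap.mul' k H) (nu (k := k) (H := H))
      (TensorProduct.tensorTensorTensorComm k H H H H (X ⊗ₜ Coalgebra.comul (R := k) b))) =
    Coalgebra.counit (R := k) b •
      (LinearMap.mul' k H) (LinearMap.lTensor H (S) X) := by
  induction X with
  | zero => simp
  | tmul x y =>
    rw [key2aux1, HopfAlgebra.mul_antipode_lTensor_comul_apply]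
    simp [Algebra.smul_def, Algebra.commutes, mul_assoc]
  | add X₁ X₂ h₁ h₂ => simp only [add_tmul, map_add, h₁, h₂, smul_add]

lemma key2 : conv (LinearMap.mul' k H) (nu (k := k) (H := H)) = (convUnit (C := H ⊗[k] H)) := by
  apply TensorProduct.ext'
  intro x y
  show (LinearMap.mul' k H) ((TensorProduct.map _ _) (Coalgebra.comul (R := k) (x ⊗ₜ y))) = _
  rw [comul_tmulHH, key2aux2, HopfAlgebra.mul_antipode_lTensor_comul_apply]
  show Coalgebra.counit (R := k) y • (algebraMap k H) (Coalgebra.counit (R := k) x) =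
    (algebraMap k H) (Coalgebra.counit (R := k) (A := H ⊗[k] H) (x ⊗ₜ y))
  rw [counit_tmulHH]
  rw [Algebra.smul_def, ← map_mul, mul_comm]

lemma antipode_mul (a b : H) : S (a * b) = S b * S a := by
  have h : (S) ∘ₗ LinearMap.mul' k H = nu (k := k) (H := H) := by
    calc (S) ∘ₗ LinearMap.mul' k H
        = conv ((S) ∘ₗ LinearMap.mul' k H) convUnit := (conv_unit_right _).symm
      _ = conv ((S) ∘ₗ LinearMap.mul' k H) (conv (LinearMap.mul' k H) nu) := by rw [key2]
      _ = conv (conv ((S) ∘ₗ LinearMap.mul' k H) (LinearMap.mul' k H)) nu :=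
          (conv_assoc _ _ _).symm
      _ = conv convUnit nu := by rw [key1]
      _ = nu := conv_unit_left _
  have := LinearMap.congr_fun h (a ⊗ₜ[k] b)
  simpa [nu] using this

lemma antipode_one : S (1 : H) = 1 := by
  have h := HopfAlgebra.mul_antipode_rTensor_comul_apply (R := k) (1 : H)
  rw [Bialgebra.comul_one] at h
  rw [Algebra.TensorProduct.one_def] at h
  rw [LinearMap.rTensor_tmul, LinearMap.mul'_apply, mul_one] at h
  rw [Bialgebra.counit_one] at h
  simpa using h

end Antipode

section Quasi

lemma i12_tmul (x y : H) : ι12 (k := k) (x ⊗ₜ y) = x ⊗ₜ (y ⊗ₜ (1 : H)) := rfl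

lemma i13_tmul (x y : H) : ι13 (k := k) (x ⊗ₜ y) = x ⊗ₜ ((1 : H) ⊗ₜ y) := rfl

lemma i23_tmul (x y : H) : ι23 (k := k) (x ⊗ₜ y) = (1 : H) ⊗ₜ (x ⊗ₜ y) := rfl

lemma uElt_tmul (x y : H) : uElt (k := k) (x ⊗ₜ y) = S y * x := by
  simp [uElt]

lemma uElt_zero : uElt (k := k) (0 : H ⊗[k] H) = 0 := by simp [uElt]

lemma uElt_add (X Y : H ⊗[k] H) :
    uElt (k := k) (X + Y) = uElt (k := k) X + uElt (k := k) Y := by simp [uElt]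

lemma uInvElt_zero : uInvElt (k := k) (0 : H ⊗[k] H) = 0 := by simp [uInvElt]

lemma uInvElt_add (X Y : H ⊗[k] H) :
    uInvElt (k := k) (X + Y) = uInvElt (k := k) X + uInvElt (k := k) Y := by simp [uInvElt]

lemma uInvElt_tmul (x y : H) : uInvElt (k := k) (x ⊗ₜ y) = y * S (S x) := by
  simp [uInvElt]

/-- kill the first tensor factor with the counit -/
noncomputable def cLmap : (H ⊗[k] H) →ₐ[k] H :=
  Algebra.TensorProduct.lift ((Algebra.ofId k H).comp (Bialgebra.counitAlgHom k H))
    (AlgHom.id k H) (fun x y => by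
      simpa [Algebra.ofId_apply] using Algebra.commute_algebraMap_left
        ((Bialgebra.counitAlgHom k H) x) y)

/-- kill the second tensor factor with the counit -/
noncomputable def cRmap : (H ⊗[k] H) →ₐ[k] H :=
  Algebra.TensorProduct.lift (AlgHom.id k H)
    ((Algebra.ofId k H).comp (Bialgebra.counitAlgHom k H)) (fun x y => by
      simpa [Algebra.ofId_apply] using
        (Algebra.commute_algebraMap_left ((Bialgebra.counitAlgHom k H) y) x).symm)

lemma cLmap_tmul (x y : H) : cLmap (k := k) (x ⊗ₜ y) = Coalgebra.counit (R := k) x • y := by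
  simp [cLmap, Algebra.TensorProduct.lift_tmul, Algebra.ofId_apply, Algebra.smul_def]

lemma cRmap_tmul (x y : H) : cRmap (k := k) (x ⊗ₜ y) = Coalgebra.counit (R := k) y • x := by
  simp [cRmap, Algebra.TensorProduct.lift_tmul, Algebra.ofId_apply, Algebra.smul_def,
    Algebra.commutes]

lemma cLmap_comul (x : H) : cLmap (k := k) (Coalgebra.comul (R := k) x) = x := by
  have h1 : ∀ Z : H ⊗[k] H, cLmap (k := k) Z =
      TensorProduct.lid k H ((Coalgebra.counit (R := k)).rTensor H Z) := by
    intro Z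
    induction Z with
    | zero => simp
    | tmul p q => simp [cLmap_tmul]
    | add Z₁ Z₂ h₁ h₂ => simp [map_add, h₁, h₂]
  rw [h1, Coalgebra.rTensor_counit_comul]
  simp

lemma cRmap_comul (x : H) : cRmap (k := k) (Coalgebra.comul (R := k) x) = x := by
  have h1 : ∀ Z : H ⊗[k] H, cRmap (k := k) Z =
      TensorProduct.rid k H ((Coalgebra.counit (R := k)).lTensor H Z) := by
    intro Z
    induction Z with
    | zero => simp
    | tmul p q => simp [cRmap_tmul]
    | add Z₁ Z₂ h₁ h₂ => simp [map_add, h₁, h₂]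
  rw [h1, Coalgebra.lTensor_counit_comul]
  simp

end Quasi

section Quasi2

variable (R Rinv : H ⊗[k] H)

/-- `(ε ⊗ id) R = 1` -/
lemma cL_R (hR' : Rinv * R = 1)
    (hqua1 : (TensorProduct.assoc k H H H) ((Coalgebra.comul (R := k)).rTensor H R) =
      ι13 (k := k) (H := H) R * ι23 (k := k) (H := H) R) :
    cLmap (k := k) R = 1 := by
  set φ : (H ⊗[k] (H ⊗[k] H)) →ₐ[k] H ⊗[k] H :=
    Algebra.TensorProduct.map (AlgHom.id k H) (cLmap (k := k)) with hφ
  have hA : ∀ W : H ⊗[k] H,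
      φ ((TensorProduct.assoc k H H H) ((Coalgebra.comul (R := k)).rTensor H W)) = W := by
    have key : ∀ (Z : H ⊗[k] H) (y : H),
        φ ((TensorProduct.assoc k H H H) (Z ⊗ₜ y)) = (cRmap (k := k) Z) ⊗ₜ y := by
      intro Z y
      induction Z with
      | zero => simp
      | tmul p q => simp [hφ, cLmap_tmul, cRmap_tmul, smul_tmul, tmul_smul]
      | add Z₁ Z₂ h₁ h₂ => simp only [add_tmul, map_add, h₁, h₂]
    intro W
    induction W with
    | zero => rw [map_zero, map_zero, map_zero]
    | tmul x y =>
      rw [LinearMap.rTensor_tmul, key, cRmap_comul]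
    | add W₁ W₂ h₁ h₂ => simp only [map_add, h₁, h₂]
  have hB : ∀ W : H ⊗[k] H, φ (ι13 (k := k) W) = W := by
    intro W
    induction W with
    | zero => simp
    | tmul x y => simp [hφ, i13_tmul, cLmap_tmul]
    | add W₁ W₂ h₁ h₂ => simp only [map_add, h₁, h₂]
  have hC : ∀ W : H ⊗[k] H, φ (ι23 (k := k) W) = (1 : H) ⊗ₜ cLmap (k := k) W := by
    intro W
    induction W with
    | zero => simp
    | tmul x y => simp [hφ, i23_tmul, cLmap_tmul]
    | add W₁ W₂ h₁ h₂ => simp only [map_add, h₁, h₂, tmul_add]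
  have h1 : R = R * ((1 : H) ⊗ₜ cLmap (k := k) R) := by
    conv_lhs => rw [← hA R, hqua1]
    rw [map_mul, hB, hC]
  have h2 : (1 : H ⊗[k] H) = (1 : H) ⊗ₜ cLmap (k := k) R := by
    calc (1 : H ⊗[k] H) = Rinv * R := hR'.symm
      _ = Rinv * (R * ((1 : H) ⊗ₜ cLmap (k := k) R)) := by rw [← h1]
      _ = (Rinv * R) * ((1 : H) ⊗ₜ cLmap (k := k) R) := by rw [mul_assoc]
      _ = (1 : H) ⊗ₜ cLmap (k := k) R := by rw [hR', one_mul]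
  have h3 := congrArg (cLmap (k := k)) h2
  rw [map_one, cLmap_tmul] at h3
  simpa using h3.symm

/-- `(id ⊗ ε) R = 1` -/
lemma cR_R (hR : R * Rinv = 1)
    (hqua1' : (Coalgebra.comul (R := k)).lTensor H R =
      ι13 (k := k) (H := H) R * ι12 (k := k) (H := H) R) :
    cRmap (k := k) R = 1 := by
  set φ : (H ⊗[k] (H ⊗[k] H)) →ₐ[k] H ⊗[k] H :=
    Algebra.TensorProduct.map (AlgHom.id k H) (cRmap (k := k)) with hφ
  have hA : ∀ W : H ⊗[k] H, φ ((Coalgebra.comul (R := k)).lTensor H W) = W := by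
    intro W
    induction W with
    | zero => rw [map_zero, map_zero]
    | tmul x y =>
      rw [LinearMap.lTensor_tmul]
      simp [hφ, cRmap_comul]
    | add W₁ W₂ h₁ h₂ => simp only [map_add, h₁, h₂]
  have hB : ∀ W : H ⊗[k] H, φ (ι13 (k := k) W) = (cRmap (k := k) W) ⊗ₜ (1 : H) := by
    intro W
    induction W with
    | zero => simp
    | tmul x y => simp [hφ, i13_tmul, cRmap_tmul, smul_tmul, tmul_smul]
    | add W₁ W₂ h₁ h₂ => simp only [map_add, h₁, h₂, add_tmul]
  have hC : ∀ W : H ⊗[k] H, φ (ι12 (k := k) W) = W := by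
    intro W
    induction W with
    | zero => simp
    | tmul x y => simp [hφ, i12_tmul, cRmap_tmul]
    | add W₁ W₂ h₁ h₂ => simp only [map_add, h₁, h₂]
  have h1 : R = ((cRmap (k := k) R) ⊗ₜ (1 : H)) * R := by
    conv_lhs => rw [← hA R, hqua1']
    rw [map_mul, hB, hC]
  have h2 : (1 : H ⊗[k] H) = (cRmap (k := k) R) ⊗ₜ (1 : H) := by
    calc (1 : H ⊗[k] H) = R * Rinv := hR.symm
      _ = (((cRmap (k := k) R) ⊗ₜ (1 : H)) * R) * Rinv := by rw [← h1]
      _ = ((cRmap (k := k) R) ⊗ₜ (1 : H)) * (R * Rinv) := by rw [mul_assoc]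
      _ = (cRmap (k := k) R) ⊗ₜ (1 : H) := by rw [hR, mul_one]
  have h3 := congrArg (cRmap (k := k)) h2
  rw [map_one, cRmap_tmul] at h3
  simpa using h3.symm

end Quasi2

section Quasi3

variable (R Rinv : H ⊗[k] H)

lemma lam1_13_23 (X Y : H ⊗[k] H) :
    (LinearMap.rTensor H ((LinearMap.mul' k H) ∘ₗ LinearMap.rTensor H (S)))
        ((TensorProduct.assoc k H H H).symm (ι13 (k := k) X * ι23 (k := k) Y)) =
      (LinearMap.rTensor H (S) X) * Y := by
  induction X with
  | zero => simp
  | tmul x y =>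
    induction Y with
    | zero => simp
    | tmul z w =>
      simp only [i13_tmul, i23_tmul, Algebra.TensorProduct.tmul_mul_tmul, one_mul, mul_one]
      simp [Algebra.TensorProduct.tmul_mul_tmul]
    | add Y₁ Y₂ h₁ h₂ => simp only [mul_add, map_add, h₁, h₂]
  | add X₁ X₂ h₁ h₂ => simp only [add_mul, map_add, h₁, h₂]

/-- `(S ⊗ id) R = R⁻¹` -/
lemma sid_R (hR : R * Rinv = 1) (hR' : Rinv * R = 1)
    (hqua1 : (TensorProduct.assoc k H H H) ((Coalgebra.comul (R := k)).rTensor H R) =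
      ι13 (k := k) (H := H) R * ι23 (k := k) (H := H) R) :
    LinearMap.rTensor H (S) R = Rinv := by
  have hcl : cLmap (k := k) R = 1 := cL_R R Rinv hR' hqua1
  have hlhs : ∀ W : H ⊗[k] H,
      (LinearMap.rTensor H ((LinearMap.mul' k H) ∘ₗ LinearMap.rTensor H (S)))
        ((TensorProduct.assoc k H H H).symm
          ((TensorProduct.assoc k H H H) ((Coalgebra.comul (R := k)).rTensor H W))) =
      (1 : H) ⊗ₜ cLmap (k := k) W := by
    intro W
    induction W with
    | zero => simp
    | tmul x y =>
      rw [LinearMap.rTensor_tmul, LinearEquiv.symm_apply_apply, LinearMap.rTensor_tmul,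
        LinearMap.comp_apply, HopfAlgebra.mul_antipode_rTensor_comul_apply, cLmap_tmul]
      simp [Algebra.algebraMap_eq_smul_one, smul_tmul, tmul_smul]
    | add W₁ W₂ h₁ h₂ => simp only [map_add, h₁, h₂, tmul_add]
  have h1 : (LinearMap.rTensor H (S) R) * R = 1 := by
    rw [← lam1_13_23, ← hqua1, hlhs, hcl, Algebra.TensorProduct.one_def]
  calc LinearMap.rTensor H (S) R
      = (LinearMap.rTensor H (S) R) * (R * Rinv) := by rw [hR, mul_one]
    _ = ((LinearMap.rTensor H (S) R) * R) * Rinv := by rw [mul_assoc]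
    _ = Rinv := by rw [h1, one_mul]

lemma lam2_12_13 (X Y : H ⊗[k] H) :
    (LinearMap.lTensor H ((LinearMap.mul' k H) ∘ₗ LinearMap.rTensor H (S)))
        (ι12 (k := k) X * ι13 (k := k) Y) =
      (LinearMap.lTensor H (S) X) * Y := by
  induction X with
  | zero => simp
  | tmul x y =>
    induction Y with
    | zero => simp
    | tmul z w =>
      simp only [i12_tmul, i13_tmul, Algebra.TensorProduct.tmul_mul_tmul, one_mul, mul_one]
      simp [Algebra.TensorProduct.tmul_mul_tmul]
    | add Y₁ Y₂ h₁ h₂ => simp only [mul_add, map_add, h₁, h₂]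
  | add X₁ X₂ h₁ h₂ => simp only [add_mul, map_add, h₁, h₂]

/-- `(S ⊗ S) R = R` -/
lemma SS_R (hR : R * Rinv = 1) (hR' : Rinv * R = 1)
    (hqua1 : (TensorProduct.assoc k H H H) ((Coalgebra.comul (R := k)).rTensor H R) =
      ι13 (k := k) (H := H) R * ι23 (k := k) (H := H) R)
    (hqua1' : (Coalgebra.comul (R := k)).lTensor H R =
      ι13 (k := k) (H := H) R * ι12 (k := k) (H := H) R) :
    TensorProduct.map (S) (S) R = R := by
  have hcr : cRmap (k := k) R = 1 := cR_R R Rinv hR hqua1'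
  have hcrinv : cRmap (k := k) Rinv = 1 := by
    have := congrArg (cRmap (k := k)) hR
    rw [map_mul, map_one, hcr, one_mul] at this
    exact this
  set ψ : (H ⊗[k] H) →ₐ[k] H ⊗[k] (H ⊗[k] H) :=
    Algebra.TensorProduct.map (AlgHom.id k H) (Bialgebra.comulAlgHom k H) with hψ
  have hψap : ∀ W : H ⊗[k] H, ψ W = (Coalgebra.comul (R := k)).lTensor H W := by
    intro W
    induction W with
    | zero => rw [map_zero, map_zero]
    | tmul x y => rfl
    | add W₁ W₂ h₁ h₂ => simp only [map_add, h₁, h₂]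
  have hψR : ψ R = ι13 (k := k) R * ι12 (k := k) R := by rw [hψap, hqua1']
  have hψRinv : ψ Rinv = ι12 (k := k) Rinv * ι13 (k := k) Rinv := by
    have e1 : (ι12 (k := k) Rinv * ι13 (k := k) Rinv) * ψ R = 1 := by
      rw [hψR]
      calc (ι12 (k := k) Rinv * ι13 (k := k) Rinv) * (ι13 (k := k) R * ι12 (k := k) R)
          = ι12 (k := k) Rinv * ((ι13 (k := k) Rinv * ι13 (k := k) R) * ι12 (k := k) R) := by
            simp only [mul_assoc]
        _ = ι12 (k := k) Rinv * ι12 (k := k) R := by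
            rw [← map_mul, hR', map_one, one_mul]
        _ = 1 := by rw [← map_mul, hR', map_one]
    calc ψ Rinv = 1 * ψ Rinv := (one_mul _).symm
      _ = ((ι12 (k := k) Rinv * ι13 (k := k) Rinv) * ψ R) * ψ Rinv := by rw [e1]
      _ = (ι12 (k := k) Rinv * ι13 (k := k) Rinv) * (ψ R * ψ Rinv) := by rw [mul_assoc]
      _ = (ι12 (k := k) Rinv * ι13 (k := k) Rinv) * ψ (R * Rinv) := by rw [map_mul]
      _ = ι12 (k := k) Rinv * ι13 (k := k) Rinv := by rw [hR, map_one, mul_one]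
  have hlhs : ∀ W : H ⊗[k] H,
      (LinearMap.lTensor H ((LinearMap.mul' k H) ∘ₗ LinearMap.rTensor H (S)))
        ((Coalgebra.comul (R := k)).lTensor H W) = (cRmap (k := k) W) ⊗ₜ (1 : H) := by
    intro W
    induction W with
    | zero => simp
    | tmul x y =>
      rw [LinearMap.lTensor_tmul, LinearMap.lTensor_tmul, LinearMap.comp_apply,
        HopfAlgebra.mul_antipode_rTensor_comul_apply, cRmap_tmul]
      simp [Algebra.algebraMap_eq_smul_one, smul_tmul, tmul_smul]
    | add W₁ W₂ h₁ h₂ => simp only [map_add, h₁, h₂, add_tmul]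
  have h1 : (LinearMap.lTensor H (S) Rinv) * Rinv = 1 := by
    rw [← lam2_12_13, ← hψRinv, hψap, hlhs, hcrinv, Algebra.TensorProduct.one_def]
  have h2 : LinearMap.lTensor H (S) Rinv = R := by
    calc LinearMap.lTensor H (S) Rinv
        = (LinearMap.lTensor H (S) Rinv) * (Rinv * R) := by rw [hR', mul_one]
      _ = ((LinearMap.lTensor H (S) Rinv) * Rinv) * R := by rw [mul_assoc]
      _ = R := by rw [h1, one_mul]
  have h3 : Rinv = LinearMap.rTensor H (S) R := (sid_R R Rinv hR hR' hqua1).symm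
  rw [h3] at h2
  calc TensorProduct.map (S) (S) R
      = ((LinearMap.lTensor H (S)) ∘ₗ (LinearMap.rTensor H (S))) R := by
        rw [LinearMap.lTensor_comp_rTensor]
    _ = R := h2

end Quasi3

section KeyLemma

/-- `Φ (p ⊗ q ⊗ r) = S²(r) S(q) p` -/
noncomputable def Phi : H ⊗[k] (H ⊗[k] H) →ₗ[k] H :=
  (LinearMap.mul' k H) ∘ₗ (TensorProduct.comm k H H).toLinearMap ∘ₗ
    LinearMap.lTensor H ((LinearMap.mul' k H) ∘ₗ
      (TensorProduct.map ((S) ∘ₗ (S)) (S)) ∘ₗ (TensorProduct.comm k H H).toLinearMap)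

lemma Phi_tmul (p q r : H) : Phi (k := k) (p ⊗ₜ (q ⊗ₜ r)) = S (S r) * S q * p := by
  simp [Phi]

/-- `N_c (p ⊗ s) = S(s) c p` -/
noncomputable def Nmap (c : H) : H ⊗[k] H →ₗ[k] H :=
  (LinearMap.mul' k H) ∘ₗ (LinearMap.rTensor H ((LinearMap.mulRight k c) ∘ₗ (S))) ∘ₗ
    (TensorProduct.comm k H H).toLinearMap

lemma Nmap_tmul (c p s : H) : Nmap (k := k) c (p ⊗ₜ s) = S s * c * p := by
  simp [Nmap]

lemma Nmap_zero (Z : H ⊗[k] H) : Nmap (k := k) 0 Z = 0 := by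
  induction Z with
  | zero => simp
  | tmul p s => simp [Nmap_tmul]
  | add Z₁ Z₂ h₁ h₂ => simp only [map_add, h₁, h₂, add_zero]

lemma Nmap_add (c c' : H) (Z : H ⊗[k] H) :
    Nmap (k := k) (c + c') Z = Nmap (k := k) c Z + Nmap (k := k) c' Z := by
  induction Z with
  | zero => simp
  | tmul p s => simp [Nmap_tmul, mul_add, add_mul]
  | add Z₁ Z₂ h₁ h₂ =>
    simp only [map_add, h₁, h₂]
    abel

/-- `J (p ⊗ q ⊗ r) = p ⊗ q S(r)` -/
noncomputable def Jmap : H ⊗[k] (H ⊗[k] H) →ₗ[k] H ⊗[k] H :=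
  LinearMap.lTensor H ((LinearMap.mul' k H) ∘ₗ LinearMap.lTensor H (S))

lemma Jmap_tmul (p q r : H) : Jmap (k := k) (p ⊗ₜ (q ⊗ₜ r)) = p ⊗ₜ (q * S r) := by
  simp [Jmap]

lemma phi_i12 (W : H ⊗[k] H) (t : H ⊗[k] (H ⊗[k] H)) :
    Phi (k := k) (ι12 (k := k) W * t) = Nmap (k := k) (uElt (k := k) W) (Jmap (k := k) t) := by
  induction W with
  | zero => simp [Nmap_zero, uElt_zero]
  | tmul a b =>
    induction t with
    | zero => simp
    | tmul p z =>
      induction z with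
      | zero => simp
      | tmul q r =>
        rw [i12_tmul, Algebra.TensorProduct.tmul_mul_tmul, Algebra.TensorProduct.tmul_mul_tmul,
          one_mul, Phi_tmul, Jmap_tmul, uElt_tmul, Nmap_tmul]
        simp [antipode_mul, mul_assoc]
      | add z₁ z₂ h₁ h₂ =>
        simp only [tmul_add, mul_add, map_add, h₁, h₂]
    | add t₁ t₂ h₁ h₂ => simp only [mul_add, map_add, h₁, h₂]
  | add W₁ W₂ h₁ h₂ =>
    simp only [map_add, add_mul, h₁, h₂, uElt_add, Nmap_add]

lemma lTensor_counit_unit (Z : H ⊗[k] H) :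
    LinearMap.lTensor H ((Algebra.linearMap k H) ∘ₗ (Coalgebra.counit (R := k))) Z =
      (cRmap (k := k) Z) ⊗ₜ (1 : H) := by
  induction Z with
  | zero => simp
  | tmul x y =>
    rw [LinearMap.lTensor_tmul, cRmap_tmul]
    simp [Algebra.algebraMap_eq_smul_one, tmul_smul, smul_tmul]
  | add Z₁ Z₂ h₁ h₂ => simp only [map_add, h₁, h₂, add_tmul]

lemma J_X (h : H) :
    Jmap (k := k) (LinearMap.lTensor H (Coalgebra.comul (R := k)) (Coalgebra.comul (R := k) h)) =
      h ⊗ₜ (1 : H) := by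
  have e1 : Jmap (k := k) ∘ₗ LinearMap.lTensor H (Coalgebra.comul (R := k)) =
      LinearMap.lTensor H ((Algebra.linearMap k H) ∘ₗ (Coalgebra.counit (R := k))) := by
    unfold Jmap
    rw [← LinearMap.lTensor_comp, LinearMap.comp_assoc,
      HopfAlgebra.mul_antipode_lTensor_comul]
  have e2 := LinearMap.congr_fun e1 (Coalgebra.comul (R := k) h)
  rw [LinearMap.comp_apply] at e2
  rw [e2, lTensor_counit_unit, cRmap_comul]

lemma i12_mul_assoc3 (W Z : H ⊗[k] H) (y : H) :
    ι12 (k := k) W * (TensorProduct.assoc k H H H) (Z ⊗ₜ y) =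
      (TensorProduct.assoc k H H H) ((W * Z) ⊗ₜ y) := by
  induction W with
  | zero => simp
  | tmul a b =>
    induction Z with
    | zero => simp
    | tmul p q =>
      rw [i12_tmul, assoc_tmul, Algebra.TensorProduct.tmul_mul_tmul,
        Algebra.TensorProduct.tmul_mul_tmul, Algebra.TensorProduct.tmul_mul_tmul, one_mul,
        assoc_tmul]
    | add Z₁ Z₂ h₁ h₂ => simp only [add_tmul, mul_add, map_add, h₁, h₂]
  | add W₁ W₂ h₁ h₂ => simp only [map_add, add_mul, h₁, h₂, add_tmul]

lemma assoc3_mul_i12 (Z W : H ⊗[k] H) (y : H) :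
    (TensorProduct.assoc k H H H) (Z ⊗ₜ y) * ι12 (k := k) W =
      (TensorProduct.assoc k H H H) ((Z * W) ⊗ₜ y) := by
  induction W with
  | zero => simp
  | tmul a b =>
    induction Z with
    | zero => simp
    | tmul p q =>
      rw [i12_tmul, assoc_tmul, Algebra.TensorProduct.tmul_mul_tmul,
        Algebra.TensorProduct.tmul_mul_tmul, Algebra.TensorProduct.tmul_mul_tmul, mul_one,
        assoc_tmul]
    | add Z₁ Z₂ h₁ h₂ => simp only [add_tmul, add_mul, map_add, h₁, h₂]
  | add W₁ W₂ h₁ h₂ => simp only [map_add, mul_add, h₁, h₂, add_tmul]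

variable (R Rinv : H ⊗[k] H)

lemma nine_a (hR' : Rinv * R = 1)
    (hqua2 : ∀ h : H, (TensorProduct.comm k H H) (Coalgebra.comul (R := k) h) =
      R * Coalgebra.comul (R := k) h * Rinv) (Z : H ⊗[k] H) :
    ι12 (k := k) R * (TensorProduct.assoc k H H H) ((Coalgebra.comul (R := k)).rTensor H Z) =
      (TensorProduct.assoc k H H H)
        ((LinearMap.rTensor H ((TensorProduct.comm k H H).toLinearMap ∘ₗ
          Coalgebra.comul (R := k))) Z) * ι12 (k := k) R := by
  induction Z with
  | zero => simp
  | tmul x y =>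
    rw [LinearMap.rTensor_tmul, LinearMap.rTensor_tmul, i12_mul_assoc3, assoc3_mul_i12]
    have e : R * Coalgebra.comul (R := k) x =
        (LinearMap.comp (TensorProduct.comm k H H).toLinearMap
          (Coalgebra.comul (R := k))) x * R := by
      rw [LinearMap.comp_apply]
      show R * Coalgebra.comul (R := k) x = (TensorProduct.comm k H H) (Coalgebra.comul x) * R
      rw [hqua2 x, mul_assoc, mul_assoc, hR', mul_one]
    rw [e]
  | add Z₁ Z₂ h₁ h₂ => simp only [map_add, mul_add, add_mul, h₁, h₂]

end KeyLemma

section KeyLemma2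

/-- `K (p ⊗ q ⊗ r) = S(q) p ⊗ r` -/
noncomputable def Kmap : H ⊗[k] (H ⊗[k] H) →ₗ[k] H ⊗[k] H :=
  LinearMap.rTensor H ((LinearMap.mul' k H) ∘ₗ (LinearMap.rTensor H (S)) ∘ₗ
      (TensorProduct.comm k H H).toLinearMap) ∘ₗ
    (TensorProduct.assoc k H H H).symm.toLinearMap

lemma Kmap_tmul (p q r : H) : Kmap (k := k) (p ⊗ₜ (q ⊗ₜ r)) = (S q * p) ⊗ₜ r := by
  simp [Kmap]

/-- `D_W (s ⊗ r) = Σ S²(r) S(W⁽²⁾) s W⁽¹⁾` -/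
noncomputable def Dmap (W : H ⊗[k] H) : H ⊗[k] H →ₗ[k] H :=
  (LinearMap.mul' k H) ∘ₗ
    (TensorProduct.map ((LinearMap.mul' k H) ∘ₗ TensorProduct.map ((S) ∘ₗ (S)) (S))
      (LinearMap.mul' k H)) ∘ₗ
    (TensorProduct.tensorTensorTensorComm k H H H H).toLinearMap ∘ₗ
    ((TensorProduct.mk k (H ⊗[k] H) (H ⊗[k] H)).flip ((TensorProduct.comm k H H) W)) ∘ₗ
    (TensorProduct.comm k H H).toLinearMap

lemma Dmap_tmul (a b s r : H) :
    Dmap (k := k) (a ⊗ₜ b) (s ⊗ₜ r) = (S (S r) * S b) * (s * a) := by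
  simp [Dmap]

lemma Dmap_zero (Z : H ⊗[k] H) : Dmap (k := k) 0 Z = 0 := by
  simp [Dmap]

lemma Dmap_add (W W' Z : H ⊗[k] H) :
    Dmap (k := k) (W + W') Z = Dmap (k := k) W Z + Dmap (k := k) W' Z := by
  simp [Dmap, tmul_add]

lemma phi_mul_i12 (W : H ⊗[k] H) (t : H ⊗[k] (H ⊗[k] H)) :
    Phi (k := k) (t * ι12 (k := k) W) = Dmap (k := k) W (Kmap (k := k) t) := by
  induction W with
  | zero => simp [Dmap_zero]
  | tmul a b =>
    induction t with
    | zero => simp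
    | tmul p z =>
      induction z with
      | zero => simp
      | tmul q r =>
        rw [i12_tmul, Algebra.TensorProduct.tmul_mul_tmul, Algebra.TensorProduct.tmul_mul_tmul,
          mul_one, Phi_tmul, Kmap_tmul, Dmap_tmul]
        simp [antipode_mul, mul_assoc]
      | add z₁ z₂ h₁ h₂ =>
        simp only [tmul_add, add_mul, map_add, h₁, h₂]
    | add t₁ t₂ h₁ h₂ => simp only [add_mul, map_add, h₁, h₂]
  | add W₁ W₂ h₁ h₂ =>
    simp only [map_add, mul_add, h₁, h₂, Dmap_add]

lemma comm_comm (V : H ⊗[k] H) :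
    (TensorProduct.comm k H H) ((TensorProduct.comm k H H) V) = V := by
  induction V with
  | zero => simp
  | tmul p q => simp
  | add V₁ V₂ h₁ h₂ => simp only [map_add, h₁, h₂]

lemma K_theta' (Z : H ⊗[k] H) :
    Kmap (k := k) ((TensorProduct.assoc k H H H)
        ((LinearMap.rTensor H ((TensorProduct.comm k H H).toLinearMap ∘ₗ
          Coalgebra.comul (R := k))) Z)) = (1 : H) ⊗ₜ cLmap (k := k) Z := by
  have sub : ∀ (V : H ⊗[k] H) (y : H),
      Kmap (k := k) ((TensorProduct.assoc k H H H) (V ⊗ₜ y)) =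
        ((LinearMap.mul' k H) ((LinearMap.rTensor H (S))
          ((TensorProduct.comm k H H) V))) ⊗ₜ y := by
    intro V y
    induction V with
    | zero => simp
    | tmul p q => rw [assoc_tmul, Kmap_tmul]; simp
    | add V₁ V₂ h₁ h₂ => simp only [add_tmul, map_add, h₁, h₂]
  induction Z with
  | zero => simp
  | tmul x y =>
    rw [LinearMap.rTensor_tmul, LinearMap.comp_apply, sub]
    simp only [LinearEquiv.coe_coe]
    rw [comm_comm, HopfAlgebra.mul_antipode_rTensor_comul_apply, cLmap_tmul]
    rw [Algebra.algebraMap_eq_smul_one, smul_tmul]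
  | add Z₁ Z₂ h₁ h₂ => simp only [map_add, h₁, h₂, tmul_add]

lemma D_one (W : H ⊗[k] H) (h : H) :
    Dmap (k := k) W ((1 : H) ⊗ₜ h) = S (S h) * uElt (k := k) W := by
  induction W with
  | zero => simp [Dmap_zero, uElt_zero]
  | tmul a b =>
    rw [Dmap_tmul, uElt_tmul]
    simp [mul_assoc]
  | add W₁ W₂ h₁ h₂ => simp only [Dmap_add, uElt_add, h₁, h₂, mul_add]

variable (R Rinv : H ⊗[k] H)

/-- the key lemma: `u h = S²(h) u`. -/
lemma u_conj (hR' : Rinv * R = 1)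
    (hqua2 : ∀ h : H, (TensorProduct.comm k H H) (Coalgebra.comul (R := k) h) =
      R * Coalgebra.comul (R := k) h * Rinv) (h : H) :
    uElt (k := k) R * h = S (S h) * uElt (k := k) R := by
  calc uElt (k := k) R * h
      = Nmap (k := k) (uElt (k := k) R)
          (Jmap (k := k) (LinearMap.lTensor H (Coalgebra.comul (R := k))
            (Coalgebra.comul (R := k) h))) := by
        rw [J_X, Nmap_tmul, antipode_one, one_mul]
    _ = Phi (k := k) (ι12 (k := k) R * LinearMap.lTensor H (Coalgebra.comul (R := k))
          (Coalgebra.comul (R := k) h)) := (phi_i12 _ _).symm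
    _ = Phi (k := k) (ι12 (k := k) R * (TensorProduct.assoc k H H H)
          ((Coalgebra.comul (R := k)).rTensor H (Coalgebra.comul (R := k) h))) := by
        rw [Coalgebra.coassoc_apply]
    _ = Phi (k := k) ((TensorProduct.assoc k H H H)
          ((LinearMap.rTensor H ((TensorProduct.comm k H H).toLinearMap ∘ₗ
            Coalgebra.comul (R := k))) (Coalgebra.comul (R := k) h)) * ι12 (k := k) R) := by
        rw [nine_a R Rinv hR' hqua2]
    _ = Dmap (k := k) R (Kmap (k := k) ((TensorProduct.assoc k H H H)
          ((LinearMap.rTensor H ((TensorProduct.comm k H H).toLinearMap ∘ₗ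
            Coalgebra.comul (R := k))) (Coalgebra.comul (R := k) h)))) := phi_mul_i12 _ _
    _ = Dmap (k := k) R ((1 : H) ⊗ₜ h) := by rw [K_theta', cLmap_comul]
    _ = S (S h) * uElt (k := k) R := D_one _ _

end KeyLemma2

section Assemble

lemma uElt_mul (X Z : H ⊗[k] H) :
    uElt (k := k) (X * Z) = Nmap (k := k) (uElt (k := k) X) Z := by
  induction X with
  | zero => simp [uElt_zero, Nmap_zero]
  | tmul x y =>
    induction Z with
    | zero => simp [uElt_zero]
    | tmul p q =>
      rw [Algebra.TensorProduct.tmul_mul_tmul, uElt_tmul, uElt_tmul, Nmap_tmul]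
      simp [antipode_mul, mul_assoc]
    | add Z₁ Z₂ h₁ h₂ => simp only [mul_add, uElt_add, map_add, h₁, h₂]
  | add X₁ X₂ h₁ h₂ => simp only [add_mul, uElt_add, h₁, h₂, Nmap_add]

lemma S2_mul (a b : H) : S (S (a * b)) = S (S a) * S (S b) := by
  rw [antipode_mul, antipode_mul]

lemma S2_uElt (Z : H ⊗[k] H) :
    S (S (uElt (k := k) Z)) = uElt (k := k) (TensorProduct.map ((S) ∘ₗ (S)) ((S) ∘ₗ (S)) Z) := by
  induction Z with
  | zero => simp [uElt_zero, antipode_one]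
  | tmul x y =>
    rw [map_tmul, uElt_tmul, uElt_tmul]
    simp [antipode_mul]
  | add Z₁ Z₂ h₁ h₂ => simp only [map_add, uElt_add, h₁, h₂]

end Assemble

/-- for a quasitriangular Hopf algebra `(H, R)`, the element
`u = ∑ (S R⁽²⁾) R⁽¹⁾` is invertible with inverse `∑ R⁽²⁾ S²(R⁽¹⁾)`, and `S²(h) = u h u⁻¹`. -/
theorem u_invertible_and_implements_S_squared (R Rinv : H ⊗[k] H)
    (hR : R * Rinv = 1) (hR' : Rinv * R = 1)
    (hqua1 : (TensorProduct.assoc k H H H) ((Coalgebra.comul (R := k)).rTensor H R) =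
      ι13 (k := k) (H := H) R * ι23 (k := k) (H := H) R)
    (hqua1' : (Coalgebra.comul (R := k)).lTensor H R =
      ι13 (k := k) (H := H) R * ι12 (k := k) (H := H) R)
    (hqua2 : ∀ h : H, (TensorProduct.comm k H H) (Coalgebra.comul (R := k) h) =
      R * Coalgebra.comul (R := k) h * Rinv) :
    uElt (k := k) R * uInvElt (k := k) R = 1 ∧
      uInvElt (k := k) R * uElt (k := k) R = 1 ∧
      ∀ h : H, (HopfAlgebra.antipode (R := k) (A := H))
          ((HopfAlgebra.antipode (R := k) (A := H)) h) =
        uElt (k := k) R * h * uInvElt (k := k) R := by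
  have hss : TensorProduct.map (S) (S) R = R := SS_R R Rinv hR hR' hqua1 hqua1'
  have hsid : LinearMap.rTensor H (S) R = Rinv := sid_R R Rinv hR hR' hqua1
  have huh : ∀ h : H, uElt (k := k) R * h = S (S h) * uElt (k := k) R :=
    u_conj R Rinv hR' hqua2
  have hss2 : TensorProduct.map ((S) ∘ₗ (S)) ((S) ∘ₗ (S)) R = R := by
    have e : TensorProduct.map ((S) ∘ₗ (S)) ((S) ∘ₗ (S)) R =
        TensorProduct.map (S) (S) (TensorProduct.map (S) (S) R) := by
      rw [TensorProduct.map_comp]; rfl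
    rw [e, hss, hss]
  have hu2 : S (S (uElt (k := k) R)) = uElt (k := k) R := by
    rw [S2_uElt, hss2]
  have hvu : uInvElt (k := k) R * uElt (k := k) R = 1 := by
    have e1 : Nmap (k := k) (uElt (k := k) R) (LinearMap.rTensor H (S) R) = 1 := by
      rw [← uElt_mul, hsid, hR, Algebra.TensorProduct.one_def, uElt_tmul, antipode_one, one_mul]
    have e2 : ∀ Z : H ⊗[k] H, Nmap (k := k) (uElt (k := k) R) (LinearMap.rTensor H (S) Z) =
        uInvElt (k := k) (TensorProduct.map (S) (S) Z) * uElt (k := k) R := by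
      intro Z
      induction Z with
      | zero => simp [uInvElt_zero]
      | tmul a b =>
        rw [LinearMap.rTensor_tmul, Nmap_tmul, map_tmul, uInvElt_tmul]
        rw [mul_assoc, huh (S a), ← mul_assoc]
      | add Z₁ Z₂ h₁ h₂ => simp only [map_add, h₁, h₂, uInvElt_add, add_mul]
    have e3 := e2 R
    rw [e1, hss] at e3
    exact e3.symm
  have huv : uElt (k := k) R * uInvElt (k := k) R = 1 := by
    rw [huh (uInvElt (k := k) R)]
    conv_lhs => rw [← hu2]
    rw [← S2_mul, hvu, antipode_one, antipode_one]
  refine ⟨huv, hvu, fun h => ?_⟩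
  calc S (S h) = S (S h) * (uElt (k := k) R * uInvElt (k := k) R) := by rw [huv, mul_one]
    _ = (S (S h) * uElt (k := k) R) * uInvElt (k := k) R := by rw [mul_assoc]
    _ = (uElt (k := k) R * h) * uInvElt (k := k) R := by rw [← huh]
    _ = uElt (k := k) R * h * uInvElt (k := k) R := rfl

end Stmt3
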